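/- The LMT heuristic is not α-approximate for any α ≥ 1: there is a family of instances (parameterized by p, n, v) in which the schedule produced by ordering tasks by nondecreasing median completion time has total absolute deviation v·p·n + v·n − 3v − 4p, while another schedule achieves total deviation 2pv + vn − 3v + 2p + 2n − 6, and the ratio of these quantities tends to infinity as p, n, v → ∞. -/

import Mathlib

/-- Completion time of task `i` in schedule `S`. -/
noncomputable def Ctime {n : ℕ} (p : Fin n → ℝ) (S : Equiv.Perm (Fin n)) (i : Fin n) : ℝ :=
  ∑ j ∈ Finset.univ.filter (fun j => S j ≤ S i), p j

/-- Absolute deviation between two schedules. -/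
noncomputable def Dev {n : ℕ} (p : Fin n → ℝ) (S S' : Equiv.Perm (Fin n)) : ℝ :=
  ∑ i, |Ctime p S i - Ctime p S' i|

/-- Lower median of the values of `f` over the `v` voters (the `((v-1)/2)`-th element of the
sorted list of values). -/
noncomputable def med (v : ℕ) (f : Fin v → ℝ) : ℝ :=
  ((Finset.univ.val.map f).sort (· ≤ ·)).getD ((v - 1) / 2) 0

namespace StmtAux

lemma ctime_formula {n : ℕ} (p : Fin n → ℝ) (W : ℕ → ℝ) (S : Equiv.Perm (Fin n))
    (hW : ∀ j, p j = W ((S j : ℕ))) (i : Fin n) :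
    Ctime p S i = ∑ t ∈ Finset.range ((S i : ℕ) + 1), W t := by
  unfold Ctime
  have h1 : ∑ j ∈ Finset.univ.filter (fun j => S j ≤ S i), p j
      = ∑ t ∈ Finset.univ.filter (fun t => t ≤ S i), W (t : ℕ) := by
    apply Finset.sum_nbij' (fun j => S j) (fun t => S.symm t)
    · intro a ha; simp_all
    · intro a ha; simp_all
    · intro a _; simp
    · intro a _; simp
    · intro a _; rw [hW]
  rw [h1]
  have h2 : ∑ t ∈ Finset.univ.filter (fun t => t ≤ S i), W (t : ℕ)
      = ∑ t : Fin n, if (t : ℕ) ≤ (S i : ℕ) then W (t : ℕ) else 0 := by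
    rw [Finset.sum_filter]
    exact Finset.sum_congr rfl (fun t _ => if_congr Fin.le_def rfl rfl)
  rw [h2, Fin.sum_univ_eq_sum_range (fun t => if t ≤ (S i : ℕ) then W t else 0) n,
    ← Finset.sum_filter]
  congr 1
  ext a
  simp only [Finset.mem_filter, Finset.mem_range]
  have := (S i).isLt
  omega

/-- voter weight by position -/
noncomputable def Wv (m pr : ℕ) : ℕ → ℝ := fun t => if t = 0 ∨ t = 1 ∨ t = m+3 then (pr:ℝ) else 1
/-- identity weight by position -/
noncomputable def Wid (pr : ℕ) : ℕ → ℝ := fun t => if t ≤ 2 then (pr:ℝ) else 1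

lemma sum_Wv_mid (m pr q : ℕ) (h2 : 2 ≤ q) (hq : q ≤ m+2) :
    ∑ t ∈ Finset.range (q+1), Wv m pr t = 2*pr + q - 1 := by
  rw [Finset.range_eq_Ico, ← Finset.sum_Ico_consecutive _ (by omega : 0 ≤ 2) (by omega : 2 ≤ q+1)]
  have hA : ∑ t ∈ Finset.Ico 0 2, Wv m pr t = 2*pr := by
    rw [← Finset.range_eq_Ico]
    simp [Finset.sum_range_succ, Wv]
    ring
  have hB : ∑ t ∈ Finset.Ico 2 (q+1), Wv m pr t = q - 1 := by
    have hc : ∀ t ∈ Finset.Ico 2 (q+1), Wv m pr t = 1 := by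
      intro t ht
      simp only [Finset.mem_Ico] at ht
      simp only [Wv, if_neg (by omega : ¬(t = 0 ∨ t = 1 ∨ t = m+3))]
    rw [Finset.sum_congr rfl hc, Finset.sum_const, Nat.card_Ico, nsmul_eq_mul, mul_one,
      show q+1-2 = q-1 from by omega, Nat.cast_sub (by omega : 1 ≤ q), Nat.cast_one]
  rw [hA, hB]; ring

lemma sum_Wv_0 (m pr : ℕ) : ∑ t ∈ Finset.range 1, Wv m pr t = pr := by simp [Wv]

lemma sum_Wv_1 (m pr : ℕ) : ∑ t ∈ Finset.range 2, Wv m pr t = 2*pr := by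
  simp [Finset.sum_range_succ, Wv]; ring

lemma sum_Wv_top (m pr : ℕ) : ∑ t ∈ Finset.range (m+4), Wv m pr t = 3*pr + m + 1 := by
  have h : m+4 = (m+3)+1 := rfl
  rw [h, Finset.sum_range_succ, sum_Wv_mid m pr (m+2) (by omega) (by omega)]
  simp [Wv]; ring

lemma sum_Wid_le2 (pr q : ℕ) (h : q ≤ 2) :
    ∑ t ∈ Finset.range (q+1), Wid pr t = (q+1) * pr := by
  interval_cases q <;> simp [Finset.sum_range_succ, Wid] <;> ring

lemma sum_Wid_ge3 (pr q : ℕ) (h : 3 ≤ q) :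
    ∑ t ∈ Finset.range (q+1), Wid pr t = 3*pr + q - 2 := by
  rw [Finset.range_eq_Ico, ← Finset.sum_Ico_consecutive _ (by omega : 0 ≤ 3) (by omega : 3 ≤ q+1)]
  have hA : ∑ t ∈ Finset.Ico 0 3, Wid pr t = 3*pr := by
    rw [← Finset.range_eq_Ico]
    simp [Finset.sum_range_succ, Wid]; ring
  have hB : ∑ t ∈ Finset.Ico 3 (q+1), Wid pr t = q - 2 := by
    have hc : ∀ t ∈ Finset.Ico 3 (q+1), Wid pr t = 1 := by
      intro t ht
      simp only [Finset.mem_Ico] at ht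
      simp only [Wid, if_neg (by omega : ¬(t ≤ 2))]
    rw [Finset.sum_congr rfl hc, Finset.sum_const, Nat.card_Ico, nsmul_eq_mul, mul_one,
      show q+1-3 = q-2 from by omega, Nat.cast_sub (by omega : 2 ≤ q), Nat.cast_two]
  rw [hA, hB]; ring

lemma sorted_getD_eq (l : List ℝ) (hl : l.Pairwise (· ≤ ·)) (n : ℕ) (c : ℝ)
    (h1 : (l.countP (fun x => decide (x < c))) ≤ n)
    (h2 : n < l.countP (fun x => decide (x ≤ c))) :
    l.getD n 0 = c := by
  have hn : n < l.length := lt_of_lt_of_le h2 List.countP_le_length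
  rw [List.getD_eq_getElem l 0 hn]
  rcases lt_trichotomy (l[n]) c with h | h | h
  · exfalso
    have key : ∀ x ∈ l.take (n+1), decide (x < c) = true := by
      intro x hx
      obtain ⟨i, hi, rfl⟩ := List.mem_iff_getElem.mp hx
      rw [List.getElem_take]
      have hi' : i ≤ n := by
        have := hi; rw [List.length_take] at this; omega
      have hle : l[i]'(by omega) ≤ l[n] := by
        rcases eq_or_lt_of_le hi' with h' | h'
        · subst h'; exact le_refl _
        · exact List.pairwise_iff_getElem.mp hl i n (by omega) hn h'
      simpa using lt_of_le_of_lt hle h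
    have hge : l.countP (fun x => decide (x < c)) ≥ n+1 := by
      conv_lhs => rw [← List.take_append_drop (n+1) l]
      rw [List.countP_append]
      have := List.countP_eq_length.mpr key
      rw [this, List.length_take]
      omega
    omega
  · exact h
  · exfalso
    have key : ∀ x ∈ l.drop n, decide (x ≤ c) = false := by
      intro x hx
      obtain ⟨i, hi, rfl⟩ := List.mem_iff_getElem.mp hx
      rw [List.getElem_drop]
      have hlen : n + i < l.length := by
        have := hi; rw [List.length_drop] at this; omega
      have hle : l[n] ≤ l[n+i]'hlen := by
        rcases Nat.eq_zero_or_pos i with h' | h'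
        · subst h'; exact le_refl _
        · exact List.pairwise_iff_getElem.mp hl n (n+i) hn hlen (by omega)
      simp [not_le.mpr (lt_of_lt_of_le h hle)]
    have hle : l.countP (fun x => decide (x ≤ c)) ≤ n := by
      conv_lhs => rw [← List.take_append_drop n l]
      rw [List.countP_append]
      have hz : (l.drop n).countP (fun x => decide (x ≤ c)) = 0 := by
        rw [List.countP_eq_zero]
        intro x hx
        simp [key x hx]
      rw [hz]
      have := List.countP_le_length (l := l.take n) (p := fun x => decide (x ≤ c))
      rw [List.length_take] at this
      omega
    omega

lemma med_eq (v : ℕ) (hv : 4 ≤ v) (hve : Even v) (f : Fin v → ℝ) (c : ℝ)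
    (hlow : ∀ k, c ≤ f k)
    (hcount : v/2 ≤ (Finset.univ.filter (fun k => f k ≤ c)).card) :
    med v f = c := by
  unfold med
  have hsorted := Multiset.pairwise_sort (α := ℝ) (Finset.univ.val.map f) (· ≤ ·)
  have hidx : (v - 1) / 2 = v/2 - 1 := by
    obtain ⟨u, rfl⟩ := hve; omega
  rw [hidx]
  apply sorted_getD_eq _ hsorted
  · have hz : ((Finset.univ.val.map f).sort (· ≤ ·)).countP (fun x => decide (x < c)) = 0 := by
      rw [List.countP_eq_zero]
      intro x hx
      rw [← Multiset.mem_coe, Multiset.sort_eq] at hx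
      obtain ⟨k, _, rfl⟩ := Multiset.mem_map.mp hx
      simp [not_lt.mpr (hlow k)]
    omega
  · have hc : ((Finset.univ.val.map f).sort (· ≤ ·)).countP (fun x => decide (x ≤ c))
        = (Finset.univ.filter (fun k => f k ≤ c)).card := by
      have h : (((Finset.univ.val.map f).sort (· ≤ ·) : List ℝ) : Multiset ℝ).countP (fun x => x ≤ c)
          = Multiset.countP (fun x => x ≤ c) (Finset.univ.val.map f) := by
        rw [Multiset.sort_eq]
      rw [Multiset.coe_countP] at h
      rw [h, Multiset.countP_map]
      rfl
    rw [hc] at *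
    omega

lemma sum_fin_split4 (m : ℕ) (g : Fin (m+4) → ℝ) :
    ∑ i, g i = g 0 + g 1 + g 2 + ∑ i ∈ Finset.univ.filter (fun i : Fin (m+4) => 3 ≤ (i:ℕ)), g i := by
  rw [← Finset.sum_filter_add_sum_filter_not Finset.univ (fun i : Fin (m+4) => 3 ≤ (i:ℕ)) g]
  rw [add_comm]
  congr 1
  have h : Finset.univ.filter (fun i : Fin (m+4) => ¬ 3 ≤ (i:ℕ))
      = {(0 : Fin (m+4)), 1, 2} := by
    ext a
    simp only [Finset.mem_filter, Finset.mem_univ, true_and, Finset.mem_insert,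
      Finset.mem_singleton]
    constructor
    · intro ha
      rcases (by omega : (a:ℕ) = 0 ∨ (a:ℕ) = 1 ∨ (a:ℕ) = 2) with h | h | h
      · left; apply Fin.ext; simpa using h
      · right; left; apply Fin.ext; simpa using h
      · right; right; apply Fin.ext; simpa [Nat.mod_eq_of_lt (show 2 < m + 4 by omega)] using h
    · rintro (rfl | rfl | rfl) <;> simp [Nat.mod_eq_of_lt (show 2 < m + 4 by omega)]
  rw [h]
  rw [Finset.sum_insert (by simp [Fin.ext_iff, Nat.mod_eq_of_lt (show 2 < m + 4 by omega)]), Finset.sum_insert (by simp [Fin.ext_iff, Nat.mod_eq_of_lt (show 2 < m + 4 by omega)]),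
    Finset.sum_singleton]
  ring

lemma sum_tail_const (m : ℕ) (g : Fin (m+4) → ℝ) (c : ℝ)
    (h : ∀ i : Fin (m+4), 3 ≤ (i:ℕ) → g i = c) :
    ∑ i ∈ Finset.univ.filter (fun i : Fin (m+4) => 3 ≤ (i:ℕ)), g i = (m+1) * c := by
  rw [Finset.sum_congr rfl (fun i hi => h i (by simpa using hi)), Finset.sum_const]
  have h1 : (Finset.univ.filter (fun i : Fin (m+4) => 3 ≤ (i:ℕ))) = Finset.Ici (⟨3, by omega⟩ : Fin (m+4)) := by
    ext a; simp [Fin.le_def]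
  have h2 : (Finset.Ici (⟨3, by omega⟩ : Fin (m+4))).card = m+1 := by
    rw [Fin.card_Ici]
    rfl
  rw [h1, h2, nsmul_eq_mul]
  push_cast; ring

lemma sum_finv_split (v : ℕ) (hv : 4 ≤ v) (hve : Even v) (g : Fin v → ℝ) (A B C D : ℝ)
    (h1 : ∀ k : Fin v, (k:ℕ) < v/2 - 1 → g k = A)
    (h2 : ∀ k : Fin v, (k:ℕ) = v/2 - 1 → g k = B)
    (h3 : ∀ k : Fin v, (k:ℕ) = v/2 → g k = C)
    (h4 : ∀ k : Fin v, v/2 < (k:ℕ) → g k = D) :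
    ∑ k, g k = (v/2 - 1 : ℕ) * A + B + C + (v/2 - 1 : ℕ) * D := by
  have hx : (v/2 - 1) < v := by omega
  have hy : (v/2) < v := by omega
  set x : Fin v := ⟨v/2 - 1, hx⟩ with hxdef
  set y : Fin v := ⟨v/2, hy⟩ with hydef
  have hx' : (x:ℕ) = v/2 - 1 := rfl
  have hy' : (y:ℕ) = v/2 := rfl
  have hsplit : (Finset.univ : Finset (Fin v)) = Finset.Iio x ∪ {x} ∪ {y} ∪ Finset.Ioi y := by
    ext a
    simp only [Finset.mem_univ, Finset.mem_union, Finset.mem_Iio, Finset.mem_Ioi,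
      Finset.mem_singleton, true_iff, Fin.lt_def, Fin.ext_iff, hx', hy']
    omega
  have d1 : Disjoint (Finset.Iio x) ({x} : Finset (Fin v)) := by
    simp [Finset.disjoint_singleton_right]
  have d2 : Disjoint (Finset.Iio x ∪ {x}) ({y} : Finset (Fin v)) := by
    rw [Finset.disjoint_singleton_right]
    simp only [Finset.mem_union, Finset.mem_Iio, Finset.mem_singleton, Fin.lt_def,
      Fin.ext_iff, hx', hy']
    omega
  have d3 : Disjoint (Finset.Iio x ∪ {x} ∪ {y}) (Finset.Ioi y) := by
    rw [Finset.disjoint_left]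
    intro a ha ha'
    simp only [Finset.mem_union, Finset.mem_Iio, Finset.mem_singleton, Fin.lt_def,
      Fin.ext_iff, hx', hy'] at ha
    simp only [Finset.mem_Ioi, Fin.lt_def, hy'] at ha'
    omega
  rw [show (∑ k, g k) = ∑ k ∈ (Finset.univ : Finset (Fin v)), g k from rfl, hsplit,
    Finset.sum_union d3, Finset.sum_union d2, Finset.sum_union d1,
    Finset.sum_singleton, Finset.sum_singleton]
  have hA : ∑ k ∈ Finset.Iio x, g k = (v/2 - 1 : ℕ) * A := by
    rw [Finset.sum_congr rfl (fun k hk => h1 k (by simpa [Fin.lt_def, hx'] using hk)),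
      Finset.sum_const, Fin.card_Iio, nsmul_eq_mul, hx']
  have hD : ∑ k ∈ Finset.Ioi y, g k = (v/2 - 1 : ℕ) * D := by
    rw [Finset.sum_congr rfl (fun k hk => h4 k (by simpa [Fin.lt_def, hy'] using hk)),
      Finset.sum_const, Fin.card_Ioi, nsmul_eq_mul]
    have hc : v - 1 - (y:ℕ) = v/2 - 1 := by
      obtain ⟨u, rfl⟩ := hve
      simp [hy']
      omega
    rw [hc]
  rw [hA, hD, h2 x hx', h3 y hy']

end StmtAux


namespace StmtAux2

noncomputable def Mv (m pr : ℕ) : ℕ → ℝ :=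
  fun t => if t = 0 ∨ t = 1 then (pr:ℝ) else if t = 2 then 2*pr else 2*pr + t - 2

lemma Mv_le1 (m pr t : ℕ) (h : t ≤ 1) : Mv m pr t = pr := by
  simp only [Mv, if_pos (by omega : t = 0 ∨ t = 1)]

lemma Mv_2 (m pr t : ℕ) (h : t = 2) : Mv m pr t = 2*pr := by
  simp only [Mv, if_neg (by omega : ¬(t = 0 ∨ t = 1)), if_pos h]

lemma Mv_ge3 (m pr t : ℕ) (h : 3 ≤ t) : Mv m pr t = 2*pr + t - 2 := by
  simp only [Mv, if_neg (by omega : ¬(t = 0 ∨ t = 1)), if_neg (by omega : ¬ t = 2)]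

lemma Mv_mono (m pr : ℕ) (hpr : 1 ≤ pr) (a b : ℕ) (hab : a ≤ b) :
    Mv m pr a ≤ Mv m pr b := by
  have hprR : (1:ℝ) ≤ pr := by exact_mod_cast hpr
  have habR : ((a:ℕ):ℝ) ≤ (b:ℕ) := by exact_mod_cast hab
  rcases (by omega : a ≤ 1 ∨ a = 2 ∨ 3 ≤ a) with ha | ha | ha <;>
    rcases (by omega : b ≤ 1 ∨ b = 2 ∨ 3 ≤ b) with hb | hb | hb
  · rw [Mv_le1 m pr a ha, Mv_le1 m pr b hb]
  · rw [Mv_le1 m pr a ha, Mv_2 m pr b hb]; linarith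
  · rw [Mv_le1 m pr a ha, Mv_ge3 m pr b hb]
    have : (3:ℝ) ≤ (b:ℕ) := by exact_mod_cast hb
    linarith
  · exfalso; omega
  · rw [Mv_2 m pr a ha, Mv_2 m pr b hb]
  · rw [Mv_2 m pr a ha, Mv_ge3 m pr b hb]
    have : (3:ℝ) ≤ (b:ℕ) := by exact_mod_cast hb
    linarith
  · exfalso; omega
  · exfalso; omega
  · rw [Mv_ge3 m pr a ha, Mv_ge3 m pr b hb]; linarith

end StmtAux2


set_option maxHeartbeats 4000000 in
open StmtAux StmtAux2 in
/-- LMT is not `α`-approximate for any `α ≥ 1`.  In the family of instances with `n = m+4`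
tasks (tasks `0,1,2` of length `pr` and the rest of length `1`) and `v` even voters
(`v/2 − 1` of type 1: `t₁,t₃,t₄,…,tₙ,t₂`; one of type 2: `t₁,t₂,t₄,…,tₙ,t₃`; one of
type 3: `t₂,t₁,t₄,…,tₙ,t₃`; `v/2 − 1` of type 4: `t₂,t₃,t₄,…,tₙ,t₁`), the identity
schedule `t₁,t₂,t₃,t₄,…,tₙ` orders tasks by nondecreasing median completion time (so it is
an LMT output) and has total absolute deviation `v·pr·n + v·n − 3v − 4pr`, while the
schedule `t₁,t₃,t₄,…,tₙ,t₂` has total deviation `2pr·v + v·n − 3v + 2pr + 2n − 6`; the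
ratio of these two values is unbounded as `pr, n, v → ∞`. -/
theorem stmt14 :
    (∀ (pr m v : ℕ), 1 ≤ pr → 4 ≤ v → Even v →
      ∀ (p : Fin (m + 4) → ℝ),
        p 0 = pr → p 1 = pr → p 2 = pr →
        (∀ j : Fin (m + 4), 3 ≤ (j : ℕ) → p j = 1) →
      ∀ (P : Fin v → Equiv.Perm (Fin (m + 4))),
        (∀ k : Fin v, (k : ℕ) < v / 2 - 1 →
          ((P k 0 : ℕ) = 0 ∧ (P k 1 : ℕ) = m + 3 ∧ (P k 2 : ℕ) = 1 ∧
            ∀ j : Fin (m + 4), 3 ≤ (j : ℕ) → (P k j : ℕ) = (j : ℕ) - 1)) →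
        (∀ k : Fin v, (k : ℕ) = v / 2 - 1 →
          ((P k 0 : ℕ) = 0 ∧ (P k 1 : ℕ) = 1 ∧ (P k 2 : ℕ) = m + 3 ∧
            ∀ j : Fin (m + 4), 3 ≤ (j : ℕ) → (P k j : ℕ) = (j : ℕ) - 1)) →
        (∀ k : Fin v, (k : ℕ) = v / 2 →
          ((P k 0 : ℕ) = 1 ∧ (P k 1 : ℕ) = 0 ∧ (P k 2 : ℕ) = m + 3 ∧
            ∀ j : Fin (m + 4), 3 ≤ (j : ℕ) → (P k j : ℕ) = (j : ℕ) - 1)) →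
        (∀ k : Fin v, v / 2 < (k : ℕ) →
          ((P k 0 : ℕ) = m + 3 ∧ (P k 1 : ℕ) = 0 ∧ (P k 2 : ℕ) = 1 ∧
            ∀ j : Fin (m + 4), 3 ≤ (j : ℕ) → (P k j : ℕ) = (j : ℕ) - 1)) →
        (∀ i j : Fin (m + 4), i ≤ j →
          med v (fun k => Ctime p (P k) i) ≤ med v (fun k => Ctime p (P k) j)) ∧
        (∑ k, Dev p 1 (P k)) =
          (v : ℝ) * pr * (m + 4) + v * (m + 4) - 3 * v - 4 * pr ∧
        (∀ Salt : Equiv.Perm (Fin (m + 4)),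
          (Salt 0 : ℕ) = 0 → (Salt 1 : ℕ) = m + 3 → (Salt 2 : ℕ) = 1 →
          (∀ j : Fin (m + 4), 3 ≤ (j : ℕ) → (Salt j : ℕ) = (j : ℕ) - 1) →
          (∑ k, Dev p Salt (P k)) =
            2 * pr * v + (v : ℝ) * (m + 4) - 3 * v + 2 * pr + 2 * (m + 4) - 6)) ∧
    (∀ α : ℝ, 1 ≤ α → ∃ pr m v : ℕ, 1 ≤ pr ∧ 4 ≤ v ∧ Even v ∧
      (v : ℝ) * pr * (m + 4) + v * (m + 4) - 3 * v - 4 * pr >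
        α * (2 * pr * v + (v : ℝ) * (m + 4) - 3 * v + 2 * pr + 2 * (m + 4) - 6)) := by
  constructor
  · intro pr m v hpr hv hve p hp0 hp1 hp2 hp3 P hP1 hP2 hP3 hP4
    have hprR : (1:ℝ) ≤ (pr:ℝ) := by exact_mod_cast hpr
    have hprnn : (0:ℝ) ≤ (pr:ℝ) := by positivity
    have hmnn : (0:ℝ) ≤ (m:ℝ) := by positivity
    -- generic W-fact builder
    have hW_of : ∀ (S : Equiv.Perm (Fin (m+4))),
        ((S 0 : ℕ) = 0 ∨ (S 0 : ℕ) = 1 ∨ (S 0 : ℕ) = m+3) →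
        ((S 1 : ℕ) = 0 ∨ (S 1 : ℕ) = 1 ∨ (S 1 : ℕ) = m+3) →
        ((S 2 : ℕ) = 0 ∨ (S 2 : ℕ) = 1 ∨ (S 2 : ℕ) = m+3) →
        (∀ j : Fin (m+4), 3 ≤ (j:ℕ) → (S j : ℕ) = (j:ℕ) - 1) →
        ∀ j, p j = Wv m pr ((S j : ℕ)) := by
      intro S d0 d1 d2 d3 j
      rcases (by omega : (j:ℕ) = 0 ∨ (j:ℕ) = 1 ∨ (j:ℕ) = 2 ∨ 3 ≤ (j:ℕ)) with hj | hj | hj | hj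
      · have hj0 : j = 0 := by apply Fin.ext; simp [hj]
        subst hj0
        rw [hp0]
        simp only [Wv]
        rw [if_pos d0]
      · have hj1 : j = 1 := by apply Fin.ext; simp [hj]
        subst hj1
        rw [hp1]
        simp only [Wv]
        rw [if_pos d1]
      · have hj2 : j = 2 := by apply Fin.ext; simp [hj, Nat.mod_eq_of_lt (show 2 < m + 4 by omega)]
        subst hj2
        rw [hp2]
        simp only [Wv]
        rw [if_pos d2]
      · rw [hp3 j hj]
        have he := d3 j hj
        have hjlt := j.isLt
        simp only [Wv]
        rw [if_neg (by omega)]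
    -- tetrachotomy on voters
    have tetra : ∀ k : Fin v,
        (k:ℕ) < v/2 - 1 ∨ (k:ℕ) = v/2 - 1 ∨ (k:ℕ) = v/2 ∨ v/2 < (k:ℕ) := by
      intro k; omega
    have hWk : ∀ k : Fin v, ∀ j, p j = Wv m pr ((P k j : ℕ)) := by
      intro k
      rcases tetra k with hk | hk | hk | hk
      · obtain ⟨e0, e1, e2, e3⟩ := hP1 k hk
        exact hW_of (P k) (Or.inl e0) (Or.inr (Or.inr e1)) (Or.inr (Or.inl e2)) e3
      · obtain ⟨e0, e1, e2, e3⟩ := hP2 k hk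
        exact hW_of (P k) (Or.inl e0) (Or.inr (Or.inl e1)) (Or.inr (Or.inr e2)) e3
      · obtain ⟨e0, e1, e2, e3⟩ := hP3 k hk
        exact hW_of (P k) (Or.inr (Or.inl e0)) (Or.inl e1) (Or.inr (Or.inr e2)) e3
      · obtain ⟨e0, e1, e2, e3⟩ := hP4 k hk
        exact hW_of (P k) (Or.inr (Or.inr e0)) (Or.inl e1) (Or.inr (Or.inl e2)) e3
    have hC : ∀ k : Fin v, ∀ i, Ctime p (P k) i
        = ∑ t ∈ Finset.range ((P k i : ℕ) + 1), Wv m pr t :=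
      fun k i => ctime_formula p _ (P k) (hWk k) i
    -- tail positions for voters
    have htail : ∀ k : Fin v, ∀ j : Fin (m+4), 3 ≤ (j:ℕ) → (P k j : ℕ) = (j:ℕ) - 1 := by
      intro k
      rcases tetra k with hk | hk | hk | hk
      · exact (hP1 k hk).2.2.2
      · exact (hP2 k hk).2.2.2
      · exact (hP3 k hk).2.2.2
      · exact (hP4 k hk).2.2.2
    -- Ctime values for voters
    have hC0 : ∀ k : Fin v, Ctime p (P k) 0 =
        (if (k:ℕ) < v/2 then (pr:ℝ) else if (k:ℕ) = v/2 then 2*pr else 3*pr + m + 1) := by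
      intro k
      rcases tetra k with hk | hk | hk | hk
      · rw [hC k 0, (hP1 k hk).1, if_pos (by omega)]; exact sum_Wv_0 m pr
      · rw [hC k 0, (hP2 k hk).1, if_pos (by omega)]; exact sum_Wv_0 m pr
      · rw [hC k 0, (hP3 k hk).1, if_neg (by omega), if_pos hk]; exact sum_Wv_1 m pr
      · rw [hC k 0, (hP4 k hk).1, if_neg (by omega), if_neg (by omega)]
        rw [show m+3+1 = m+4 from rfl]; exact sum_Wv_top m pr
    have hC1 : ∀ k : Fin v, Ctime p (P k) 1 =
        (if (k:ℕ) < v/2 - 1 then 3*(pr:ℝ) + m + 1 else if (k:ℕ) = v/2 - 1 then 2*pr else pr) := by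
      intro k
      rcases tetra k with hk | hk | hk | hk
      · rw [hC k 1, (hP1 k hk).2.1, if_pos hk]
        rw [show m+3+1 = m+4 from rfl]; exact sum_Wv_top m pr
      · rw [hC k 1, (hP2 k hk).2.1, if_neg (by omega), if_pos hk]; exact sum_Wv_1 m pr
      · rw [hC k 1, (hP3 k hk).2.1, if_neg (by omega), if_neg (by omega)]; exact sum_Wv_0 m pr
      · rw [hC k 1, (hP4 k hk).2.1, if_neg (by omega), if_neg (by omega)]; exact sum_Wv_0 m pr
    have hC2 : ∀ k : Fin v, Ctime p (P k) 2 =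
        (if (k:ℕ) = v/2 - 1 ∨ (k:ℕ) = v/2 then 3*(pr:ℝ) + m + 1 else 2*pr) := by
      intro k
      rcases tetra k with hk | hk | hk | hk
      · rw [hC k 2, (hP1 k hk).2.2.1, if_neg (by omega)]; exact sum_Wv_1 m pr
      · rw [hC k 2, (hP2 k hk).2.2.1, if_pos (by omega)]
        rw [show m+3+1 = m+4 from rfl]; exact sum_Wv_top m pr
      · rw [hC k 2, (hP3 k hk).2.2.1, if_pos (by omega)]
        rw [show m+3+1 = m+4 from rfl]; exact sum_Wv_top m pr
      · rw [hC k 2, (hP4 k hk).2.2.1, if_neg (by omega)]; exact sum_Wv_1 m pr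
    have hC3 : ∀ k : Fin v, ∀ j : Fin (m+4), 3 ≤ (j:ℕ) →
        Ctime p (P k) j = 2*pr + (j:ℕ) - 2 := by
      intro k j hj
      have hjlt := j.isLt
      rw [hC k j, htail k j hj,
        show (j:ℕ) - 1 + 1 = ((j:ℕ) - 1) + 1 from rfl,
        sum_Wv_mid m pr ((j:ℕ)-1) (by omega) (by omega)]
      rw [Nat.cast_sub (by omega : 1 ≤ (j:ℕ))]
      push_cast
      ring
    -- identity Ctime values
    have hWid : ∀ j : Fin (m+4), p j = Wid pr (((1 : Equiv.Perm (Fin (m+4))) j : ℕ)) := by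
      intro j
      simp only [Equiv.Perm.one_apply, Wid]
      rcases (by omega : (j:ℕ) = 0 ∨ (j:ℕ) = 1 ∨ (j:ℕ) = 2 ∨ 3 ≤ (j:ℕ)) with hj | hj | hj | hj
      · have hj0 : j = 0 := by apply Fin.ext; simp [hj]
        subst hj0; rw [hp0]; exact (if_pos (show ((0 : Fin (m+4)) : ℕ) ≤ 2 by simp)).symm
      · have hj1 : j = 1 := by apply Fin.ext; simp [hj]
        subst hj1; rw [hp1]; exact (if_pos (show ((1 : Fin (m+4)) : ℕ) ≤ 2 by simp)).symm
      · have hj2 : j = 2 := by apply Fin.ext; simp [hj, Nat.mod_eq_of_lt (show 2 < m + 4 by omega)]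
        subst hj2; rw [hp2]; exact (if_pos (show ((2 : Fin (m+4)) : ℕ) ≤ 2 by simp [Nat.mod_eq_of_lt (show 2 < m + 4 by omega)])).symm
      · rw [hp3 j hj]; exact (if_neg (show ¬ ((j : ℕ) ≤ 2) by omega)).symm
    have hCid : ∀ i : Fin (m+4), Ctime p 1 i
        = ∑ t ∈ Finset.range ((i:ℕ) + 1), Wid pr t := by
      intro i
      have h := ctime_formula p (Wid pr) 1 hWid i
      simpa using h
    have hid0 : Ctime p 1 0 = pr := by
      rw [hCid 0, show ((0 : Fin (m+4)):ℕ) = 0 by simp]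
      have := sum_Wid_le2 pr 0 (by omega)
      rw [this]; norm_num
    have hid1 : Ctime p 1 1 = 2*pr := by
      rw [hCid 1, show ((1 : Fin (m+4)):ℕ) = 1 by simp]
      have := sum_Wid_le2 pr 1 (by omega)
      rw [this]; norm_num
    have hid2 : Ctime p 1 2 = 3*pr := by
      rw [hCid 2, show ((2 : Fin (m+4)):ℕ) = 2 by simp]
      have := sum_Wid_le2 pr 2 (by omega)
      rw [this]; norm_num
    have hid3 : ∀ i : Fin (m+4), 3 ≤ (i:ℕ) → Ctime p 1 i = 3*pr + (i:ℕ) - 2 := by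
      intro i hi
      rw [hCid i, sum_Wid_ge3 pr (i:ℕ) hi]
    -- abs helpers
    have habs1 : |2*(pr:ℝ) - (3*pr + (m:ℝ) + 1)| = pr + m + 1 := by
      rw [show 2*(pr:ℝ) - (3*pr + (m:ℝ) + 1) = -(pr + m + 1) by ring, abs_neg,
        abs_of_nonneg (by positivity)]
    have habs2 : |3*(pr:ℝ) - (3*pr + (m:ℝ) + 1)| = m + 1 := by
      rw [show 3*(pr:ℝ) - (3*pr + (m:ℝ) + 1) = -((m:ℝ) + 1) by ring, abs_neg,
        abs_of_nonneg (by positivity)]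
    have habs3 : |(pr:ℝ) - (3*pr + (m:ℝ) + 1)| = 2*pr + m + 1 := by
      rw [show (pr:ℝ) - (3*pr + (m:ℝ) + 1) = -(2*pr + m + 1) by ring, abs_neg,
        abs_of_nonneg (by positivity)]
    -- Dev from identity, per type
    have devA : ∀ k : Fin v, (k:ℕ) < v/2 - 1 →
        Dev p 1 (P k) = ((m:ℝ)+3)*pr + (m+1) := by
      intro k hk
      unfold Dev
      rw [sum_fin_split4 m (fun i => |Ctime p 1 i - Ctime p (P k) i|)]
      rw [sum_tail_const m _ (pr:ℝ) (by
        intro i hi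
        rw [hid3 i hi, hC3 k i hi, show 3*(pr:ℝ) + (i:ℕ) - 2 - (2*pr + (i:ℕ) - 2) = (pr:ℝ) by ring,
          abs_of_nonneg hprnn])]
      simp only [hid0, hid1, hid2, hC0 k, hC1 k, hC2 k,
        if_pos (show (k:ℕ) < v/2 by omega), if_pos hk,
        if_neg (show ¬((k:ℕ) = v/2 - 1 ∨ (k:ℕ) = v/2) by omega)]
      rw [sub_self, abs_zero, habs1,
        show 3*(pr:ℝ) - 2*pr = (pr:ℝ) by ring, abs_of_nonneg hprnn]
      ring
    have devB : ∀ k : Fin v, (k:ℕ) = v/2 - 1 →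
        Dev p 1 (P k) = ((m:ℝ)+1)*pr + (m+1) := by
      intro k hk
      unfold Dev
      rw [sum_fin_split4 m (fun i => |Ctime p 1 i - Ctime p (P k) i|)]
      rw [sum_tail_const m _ (pr:ℝ) (by
        intro i hi
        rw [hid3 i hi, hC3 k i hi, show 3*(pr:ℝ) + (i:ℕ) - 2 - (2*pr + (i:ℕ) - 2) = (pr:ℝ) by ring,
          abs_of_nonneg hprnn])]
      simp only [hid0, hid1, hid2, hC0 k, hC1 k, hC2 k,
        if_pos (show (k:ℕ) < v/2 by omega), if_neg (show ¬ (k:ℕ) < v/2 - 1 by omega),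
        if_pos hk, if_pos (Or.inl hk)]
      rw [sub_self, abs_zero, sub_self, abs_zero, habs2]
      ring
    have devC : ∀ k : Fin v, (k:ℕ) = v/2 →
        Dev p 1 (P k) = ((m:ℝ)+3)*pr + (m+1) := by
      intro k hk
      unfold Dev
      rw [sum_fin_split4 m (fun i => |Ctime p 1 i - Ctime p (P k) i|)]
      rw [sum_tail_const m _ (pr:ℝ) (by
        intro i hi
        rw [hid3 i hi, hC3 k i hi, show 3*(pr:ℝ) + (i:ℕ) - 2 - (2*pr + (i:ℕ) - 2) = (pr:ℝ) by ring,
          abs_of_nonneg hprnn])]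
      simp only [hid0, hid1, hid2, hC0 k, hC1 k, hC2 k,
        if_neg (show ¬ (k:ℕ) < v/2 by omega), if_pos hk,
        if_neg (show ¬ (k:ℕ) < v/2 - 1 by omega), if_neg (show ¬ (k:ℕ) = v/2 - 1 by omega),
        if_pos (Or.inr hk)]
      rw [show (pr:ℝ) - 2*pr = -(pr:ℝ) by ring, abs_neg, abs_of_nonneg hprnn,
        show 2*(pr:ℝ) - pr = (pr:ℝ) by ring, abs_of_nonneg hprnn, habs2]
      ring
    have devD : ∀ k : Fin v, v/2 < (k:ℕ) →
        Dev p 1 (P k) = ((m:ℝ)+5)*pr + (m+1) := by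
      intro k hk
      unfold Dev
      rw [sum_fin_split4 m (fun i => |Ctime p 1 i - Ctime p (P k) i|)]
      rw [sum_tail_const m _ (pr:ℝ) (by
        intro i hi
        rw [hid3 i hi, hC3 k i hi, show 3*(pr:ℝ) + (i:ℕ) - 2 - (2*pr + (i:ℕ) - 2) = (pr:ℝ) by ring,
          abs_of_nonneg hprnn])]
      simp only [hid0, hid1, hid2, hC0 k, hC1 k, hC2 k,
        if_neg (show ¬ (k:ℕ) < v/2 by omega), if_neg (show ¬ (k:ℕ) = v/2 by omega),
        if_neg (show ¬ (k:ℕ) < v/2 - 1 by omega), if_neg (show ¬ (k:ℕ) = v/2 - 1 by omega),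
        if_neg (show ¬((k:ℕ) = v/2 - 1 ∨ (k:ℕ) = v/2) by omega)]
      rw [habs3,
        show 2*(pr:ℝ) - pr = (pr:ℝ) by ring, abs_of_nonneg hprnn,
        show 3*(pr:ℝ) - 2*pr = (pr:ℝ) by ring, abs_of_nonneg hprnn]
      ring
    refine ⟨?_, ?_, ?_⟩
    · -- medians monotone
      have hmed : ∀ i : Fin (m+4), med v (fun k => Ctime p (P k) i) = Mv m pr (i:ℕ) := by
        intro i
        rcases (by omega : (i:ℕ) = 0 ∨ (i:ℕ) = 1 ∨ (i:ℕ) = 2 ∨ 3 ≤ (i:ℕ)) with hi | hi | hi | hi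
        · have hi0 : i = 0 := by apply Fin.ext; simp [hi]
          subst hi0
          rw [Mv_le1 m pr _ (by simp)]
          apply med_eq v hv hve _ (pr:ℝ)
          · intro k
            rw [hC0 k]
            split_ifs <;> nlinarith [hprR, hmnn]
          · have hsub : Finset.Iio (⟨v/2, by omega⟩ : Fin v) ⊆
                Finset.univ.filter (fun k => Ctime p (P k) 0 ≤ (pr:ℝ)) := by
              intro k hk
              simp only [Finset.mem_Iio, Fin.lt_def] at hk
              simp only [Finset.mem_filter, Finset.mem_univ, true_and]
              rw [hC0 k, if_pos hk]
            have hcard := Finset.card_le_card hsub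
            rwa [Fin.card_Iio] at hcard
        · have hi1 : i = 1 := by apply Fin.ext; simp [hi]
          subst hi1
          rw [Mv_le1 m pr _ (by simp)]
          apply med_eq v hv hve _ (pr:ℝ)
          · intro k
            rw [hC1 k]
            split_ifs <;> nlinarith [hprR, hmnn]
          · have hsub : Finset.Ici (⟨v/2, by omega⟩ : Fin v) ⊆
                Finset.univ.filter (fun k => Ctime p (P k) 1 ≤ (pr:ℝ)) := by
              intro k hk
              simp only [Finset.mem_Ici, Fin.le_def] at hk
              simp only [Finset.mem_filter, Finset.mem_univ, true_and]
              rw [hC1 k, if_neg (by omega), if_neg (by omega)]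
            have hcard := Finset.card_le_card hsub
            rw [Fin.card_Ici] at hcard
            have hcard' : v - v/2 ≤
                (Finset.univ.filter (fun k => Ctime p (P k) 1 ≤ (pr:ℝ))).card := hcard
            have hvv : v - v/2 = v/2 := by obtain ⟨u, rfl⟩ := hve; omega
            omega
        · have hi2 : i = 2 := by apply Fin.ext; simp [hi, Nat.mod_eq_of_lt (show 2 < m + 4 by omega)]
          subst hi2
          rw [Mv_2 m pr _ (by simp [Nat.mod_eq_of_lt (show 2 < m + 4 by omega)])]
          apply med_eq v hv hve _ (2*(pr:ℝ))
          · intro k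
            rw [hC2 k]
            split_ifs <;> nlinarith [hprR, hmnn]
          · have hdisj : Disjoint (Finset.Iio (⟨v/2 - 1, by omega⟩ : Fin v))
                (Finset.Ioi (⟨v/2, by omega⟩ : Fin v)) := by
              rw [Finset.disjoint_left]
              intro a ha ha'
              simp only [Finset.mem_Iio, Fin.lt_def] at ha
              simp only [Finset.mem_Ioi, Fin.lt_def] at ha'
              have ha2 : (a:ℕ) < v/2 - 1 := ha
              have ha3 : v/2 < (a:ℕ) := ha'
              omega
            have hsub : (Finset.Iio (⟨v/2 - 1, by omega⟩ : Fin v) ∪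
                Finset.Ioi (⟨v/2, by omega⟩ : Fin v)) ⊆
                Finset.univ.filter (fun k => Ctime p (P k) 2 ≤ 2*(pr:ℝ)) := by
              intro k hk
              simp only [Finset.mem_union, Finset.mem_Iio, Finset.mem_Ioi, Fin.lt_def] at hk
              simp only [Finset.mem_filter, Finset.mem_univ, true_and]
              rw [hC2 k, if_neg (by omega)]
            have hcard := Finset.card_le_card hsub
            rw [Finset.card_union_of_disjoint hdisj, Fin.card_Iio, Fin.card_Ioi] at hcard
            have hcard' : v/2 - 1 + (v - 1 - v/2) ≤
                (Finset.univ.filter (fun k => Ctime p (P k) 2 ≤ 2*(pr:ℝ))).card := hcard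
            omega
        · rw [Mv_ge3 m pr _ hi]
          apply med_eq v hv hve _ (2*(pr:ℝ) + (i:ℕ) - 2)
          · intro k
            rw [hC3 k i hi]
          · have hfil : Finset.univ.filter
                (fun k => Ctime p (P k) i ≤ 2*(pr:ℝ) + (i:ℕ) - 2) = Finset.univ := by
              apply Finset.filter_true_of_mem
              intro k _
              rw [hC3 k i hi]
            rw [hfil, Finset.card_univ, Fintype.card_fin]
            omega
      intro i j hij
      rw [hmed i, hmed j]
      exact Mv_mono m pr hpr (i:ℕ) (j:ℕ) (Fin.le_def.mp hij)
    · -- total deviation of identity schedule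
      rw [sum_finv_split v hv hve (fun k => Dev p 1 (P k)) _ _ _ _ devA devB devC devD]
      obtain ⟨u, rfl⟩ := hve
      have hu : 2 ≤ u := by omega
      have h2 : (u+u)/2 = u := by omega
      rw [h2, Nat.cast_sub (by omega : 1 ≤ u)]
      push_cast
      ring
    · -- total deviation of alternative schedule
      intro Salt hs0 hs1 hs2 hs3
      have hWs := hW_of Salt (Or.inl hs0) (Or.inr (Or.inr hs1)) (Or.inr (Or.inl hs2)) hs3
      have hCs : ∀ i, Ctime p Salt i = ∑ t ∈ Finset.range ((Salt i : ℕ) + 1), Wv m pr t :=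
        fun i => ctime_formula p _ Salt hWs i
      have hs0' : Ctime p Salt 0 = pr := by
        rw [hCs 0, hs0]; exact sum_Wv_0 m pr
      have hs1' : Ctime p Salt 1 = 3*(pr:ℝ) + m + 1 := by
        rw [hCs 1, hs1, show m+3+1 = m+4 from rfl]; exact sum_Wv_top m pr
      have hs2' : Ctime p Salt 2 = 2*pr := by
        rw [hCs 2, hs2]; exact sum_Wv_1 m pr
      have hs3' : ∀ j : Fin (m+4), 3 ≤ (j:ℕ) → Ctime p Salt j = 2*pr + (j:ℕ) - 2 := by
        intro j hj
        have hjlt := j.isLt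
        rw [hCs j, hs3 j hj, sum_Wv_mid m pr ((j:ℕ)-1) (by omega) (by omega),
          Nat.cast_sub (by omega : 1 ≤ (j:ℕ))]
        push_cast
        ring
      have devSA : ∀ k : Fin v, (k:ℕ) < v/2 - 1 → Dev p Salt (P k) = 0 := by
        intro k hk
        unfold Dev
        rw [sum_fin_split4 m (fun i => |Ctime p Salt i - Ctime p (P k) i|)]
        rw [sum_tail_const m _ (0:ℝ) (by
          intro i hi
          rw [hs3' i hi, hC3 k i hi, sub_self, abs_zero])]
        simp only [hs0', hs1', hs2', hC0 k, hC1 k, hC2 k,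
          if_pos (show (k:ℕ) < v/2 by omega), if_pos hk,
          if_neg (show ¬((k:ℕ) = v/2 - 1 ∨ (k:ℕ) = v/2) by omega)]
        rw [sub_self, abs_zero, sub_self, abs_zero, sub_self, abs_zero]
        ring
      have devSB : ∀ k : Fin v, (k:ℕ) = v/2 - 1 →
          Dev p Salt (P k) = 2*(pr:ℝ) + 2*m + 2 := by
        intro k hk
        unfold Dev
        rw [sum_fin_split4 m (fun i => |Ctime p Salt i - Ctime p (P k) i|)]
        rw [sum_tail_const m _ (0:ℝ) (by
          intro i hi
          rw [hs3' i hi, hC3 k i hi, sub_self, abs_zero])]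
        simp only [hs0', hs1', hs2', hC0 k, hC1 k, hC2 k,
          if_pos (show (k:ℕ) < v/2 by omega), if_neg (show ¬ (k:ℕ) < v/2 - 1 by omega),
          if_pos hk, if_pos (Or.inl hk)]
        rw [sub_self, abs_zero,
          show 3*(pr:ℝ) + m + 1 - 2*pr = (pr:ℝ) + m + 1 by ring,
          abs_of_nonneg (by positivity),
          show 2*(pr:ℝ) - (3*(pr:ℝ) + m + 1) = -((pr:ℝ) + m + 1) by ring, abs_neg,
          abs_of_nonneg (by positivity)]
        ring
      have devSC : ∀ k : Fin v, (k:ℕ) = v/2 →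
          Dev p Salt (P k) = 4*(pr:ℝ) + 2*m + 2 := by
        intro k hk
        unfold Dev
        rw [sum_fin_split4 m (fun i => |Ctime p Salt i - Ctime p (P k) i|)]
        rw [sum_tail_const m _ (0:ℝ) (by
          intro i hi
          rw [hs3' i hi, hC3 k i hi, sub_self, abs_zero])]
        simp only [hs0', hs1', hs2', hC0 k, hC1 k, hC2 k,
          if_neg (show ¬ (k:ℕ) < v/2 by omega), if_pos hk,
          if_neg (show ¬ (k:ℕ) < v/2 - 1 by omega), if_neg (show ¬ (k:ℕ) = v/2 - 1 by omega),
          if_pos (Or.inr hk)]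
        rw [show (pr:ℝ) - 2*pr = -(pr:ℝ) by ring, abs_neg, abs_of_nonneg hprnn,
          show 3*(pr:ℝ) + m + 1 - pr = 2*(pr:ℝ) + m + 1 by ring,
          abs_of_nonneg (by positivity),
          show 2*(pr:ℝ) - (3*(pr:ℝ) + m + 1) = -((pr:ℝ) + m + 1) by ring, abs_neg,
          abs_of_nonneg (by positivity)]
        ring
      have devSD : ∀ k : Fin v, v/2 < (k:ℕ) →
          Dev p Salt (P k) = 4*(pr:ℝ) + 2*m + 2 := by
        intro k hk
        unfold Dev
        rw [sum_fin_split4 m (fun i => |Ctime p Salt i - Ctime p (P k) i|)]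
        rw [sum_tail_const m _ (0:ℝ) (by
          intro i hi
          rw [hs3' i hi, hC3 k i hi, sub_self, abs_zero])]
        simp only [hs0', hs1', hs2', hC0 k, hC1 k, hC2 k,
          if_neg (show ¬ (k:ℕ) < v/2 by omega), if_neg (show ¬ (k:ℕ) = v/2 by omega),
          if_neg (show ¬ (k:ℕ) < v/2 - 1 by omega), if_neg (show ¬ (k:ℕ) = v/2 - 1 by omega),
          if_neg (show ¬((k:ℕ) = v/2 - 1 ∨ (k:ℕ) = v/2) by omega)]
        rw [show (pr:ℝ) - (3*(pr:ℝ) + m + 1) = -(2*(pr:ℝ) + m + 1) by ring, abs_neg,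
          abs_of_nonneg (by positivity),
          show 3*(pr:ℝ) + m + 1 - pr = 2*(pr:ℝ) + m + 1 by ring,
          abs_of_nonneg (by positivity),
          sub_self, abs_zero]
        ring
      rw [sum_finv_split v hv hve (fun k => Dev p Salt (P k)) _ _ _ _ devSA devSB devSC devSD]
      obtain ⟨u, rfl⟩ := hve
      have hu : 2 ≤ u := by omega
      have h2 : (u+u)/2 = u := by omega
      rw [h2, Nat.cast_sub (by omega : 1 ≤ u)]
      push_cast
      ring
  · -- unboundedness
    intro α hα
    set A : ℕ := ⌈α⌉₊ with hA
    have hA1 : (1:ℝ) ≤ (A:ℝ) := le_trans hα (Nat.le_ceil α)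
    have hαA : α ≤ (A:ℝ) := Nat.le_ceil α
    have hA1n : 1 ≤ A := by
      rw [hA]
      exact Nat.one_le_ceil_iff.mpr (by linarith)
    refine ⟨2*A, 20*A*A, 4, by omega, by omega, by decide, ?_⟩
    push_cast
    have hRpos : (0:ℝ) < 2 * (2*A) * 4 + (4:ℝ) * ((20*A*A:ℝ) + 4) - 3*4 + 2*(2*A) + 2*((20*A*A:ℝ)+4) - 6 := by
      nlinarith
    nlinarith [mul_le_mul_of_nonneg_right hαA (le_of_lt hRpos), sq_nonneg ((A:ℝ)),
      mul_le_mul_of_nonneg_left hA1 (by positivity : (0:ℝ) ≤ (A:ℝ)*(A:ℝ)), hA1]
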